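/- 𝒬̄^N is nonempty if and only if 𝒬̄^{N+1} is nonempty. Specifically: (a) if Q ∈ 𝒬̄^N then Q' := (1/(T+1)) Q ⊗ (δ_{0}+…+δ_{T}) belongs to 𝒬̄^{N+1}; (b) if R' ∈ 𝒬̄^{N+1} then the restriction R of R' to (Ω̄^N, 𝓕̄^N_T) belongs to 𝒬̄^N. Consequently SNA holds in 𝕄̄^N if and only if SNA holds in 𝕄̄^{N+1}. -/

import Mathlib

open MeasureTheory Finset

noncomputable section

namespace Stmt5

variable {Ω : Type*}

/-- The enlarged sample space `Ω̄ⁿ = Ω × 𝕋ⁿ`, `𝕋 = {0,…,T}`. -/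
abbrev EnlOmega (Ω : Type*) (T n : ℕ) := Ω × (Fin n → Fin (T + 1))

/-- The enlarged filtration
`𝓕̄ⁿ_t = σ(𝓕_t × 𝕋ⁿ, {θᵏ ≤ s}, s = 0,…,t, k = 1,…,n)`. -/
def enlF (T n : ℕ) (ℱ : ℕ → MeasurableSpace Ω) (t : ℕ) :
    MeasurableSpace (EnlOmega Ω T n) :=
  MeasurableSpace.generateFrom
    ({A | ∃ B, MeasurableSet[ℱ t] B ∧ A = Prod.fst ⁻¹' B} ∪
     {A | ∃ (k : Fin n) (s : ℕ), s ≤ t ∧ A = {x : EnlOmega Ω T n | ((x.2 k : ℕ)) ≤ s}})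

/-- Trivial extension of a process from `Ω` to `Ω̄ⁿ`. -/
def extProc {E : Type*} (T n : ℕ) (X : ℕ → Ω → E) : ℕ → EnlOmega Ω T n → E :=
  fun t x => X t x.1

/-- Trivial extension of a random variable from `Ω` to `Ω̄ⁿ`. -/
def extFun {E : Type*} (T n : ℕ) (ψ : Ω → E) : EnlOmega Ω T n → E := fun x => ψ x.1

/-- Extension `h̄^{k,n}(ω,t¹,…,tⁿ) = h^k_{tᵏ}(ω)` of the shorted American options. -/
def extShort (T N n : ℕ) (hn : N ≤ n) (h : Fin N → ℕ → Ω → ℝ) (k : Fin N) :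
    EnlOmega Ω T n → ℝ :=
  fun x => h k ((x.2 (Fin.castLE hn k)) : ℕ) x.1

/-- Extension `φ̄^{N+1}(ω,t¹,…,t^{N+1}) = φ_{t^{N+1}}(ω)`. -/
def extLast (T N : ℕ) (φ : ℕ → Ω → ℝ) : EnlOmega Ω T (N + 1) → ℝ :=
  fun x => φ ((x.2 (Fin.last N)) : ℕ) x.1

/-- `𝒯̄ⁿ`: `𝔽̄ⁿ`-stopping times (with values in `𝕋 = {0,…,T}`). -/
def IsEnlStoppingTime (T n : ℕ) (ℱ : ℕ → MeasurableSpace Ω)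
    (τ : EnlOmega Ω T n → Fin (T + 1)) : Prop :=
  ∀ t : ℕ, MeasurableSet[enlF T n ℱ t] {x | (τ x : ℕ) ≤ t}

/-- `S` is a `Q`-martingale w.r.t. the filtration `𝔉` (time horizon `T`). -/
def IsMartingaleMeasure {X : Type*} [MeasurableSpace X] (T d : ℕ)
    (𝔉 : ℕ → MeasurableSpace X) (S : ℕ → X → Fin d → ℝ) (Q : Measure X) : Prop :=
  (∀ t, t ≤ T → Integrable (S t) Q) ∧
  ∀ t, t < T → ∀ A : Set X, MeasurableSet[𝔉 t] A →
    ∫ x in A, S (t + 1) x ∂Q = ∫ x in A, S t x ∂Q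

/-- `𝓛̄ⁿ`: liquidating strategies on the enlarged space. -/
def EnlLiq (T n : ℕ) (ℱ : ℕ → MeasurableSpace Ω) : Set (ℕ → EnlOmega Ω T n → ℝ) :=
  {μ | (∀ t, Measurable[enlF T n ℱ t] (μ t)) ∧ (∀ t x, 0 ≤ μ t x) ∧
    ∀ x, ∑ t ∈ Finset.range (T + 1), μ t x = 1}

/-- Gain from dynamic trading on the enlarged space. -/
def enlStockGain (T d n : ℕ) (H : ℕ → EnlOmega Ω T n → Fin d → ℝ)
    (S : ℕ → Ω → Fin d → ℝ) (x : EnlOmega Ω T n) : ℝ :=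
  ∑ t ∈ Finset.range T, ∑ i, H t x i * (S (t + 1) x.1 i - S t x.1 i)

/-- The payoff `Φ̄ⁿ_{α,β,γ}(H̄,a,b,μ̄,c)` of a semi-static strategy on the enlarged space. -/
def PhiBar (T d L M N n : ℕ) (hn : N ≤ n)
    (S : ℕ → Ω → Fin d → ℝ) (f : Fin L → Ω → ℝ) (g : Fin M → ℕ → Ω → ℝ)
    (h : Fin N → ℕ → Ω → ℝ) (α : Fin L → ℝ) (β : Fin M → ℝ) (γ : Fin N → ℝ)
    (H : ℕ → EnlOmega Ω T n → Fin d → ℝ) (a : Fin L → ℝ) (b : Fin M → ℝ)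
    (μ : Fin M → ℕ → EnlOmega Ω T n → ℝ) (c : Fin N → ℝ) (x : EnlOmega Ω T n) : ℝ :=
  enlStockGain T d n H S x + (∑ i, a i * (f i x.1 - α i))
    + (∑ j, b j * ((∑ t ∈ Finset.range (T + 1), g j t x.1 * μ j t x) - β j))
    - ∑ k, c k * (extShort T N n hn h k x - γ k)

variable [MeasurableSpace Ω]

/-- No arbitrage (NA) in `𝕄̄ⁿ` w.r.t. the prices `(α,β,γ)`. -/
def NAbar (T d L M N n : ℕ) (hn : N ≤ n) (ℱ : ℕ → MeasurableSpace Ω)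
    (S : ℕ → Ω → Fin d → ℝ) (f : Fin L → Ω → ℝ) (g : Fin M → ℕ → Ω → ℝ)
    (h : Fin N → ℕ → Ω → ℝ) (Pbar : Measure (EnlOmega Ω T n))
    (α : Fin L → ℝ) (β : Fin M → ℝ) (γ : Fin N → ℝ) : Prop :=
  ∀ H a b μ c, (∀ t, Measurable[enlF T n ℱ t] (H t)) → (∀ i, 0 ≤ a i) →
    (∀ j, 0 ≤ b j) → (∀ k, 0 ≤ c k) → (∀ j, μ j ∈ EnlLiq T n ℱ) →
    (∀ᵐ x ∂Pbar, 0 ≤ PhiBar T d L M N n hn S f g h α β γ H a b μ c x) →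
    ∀ᵐ x ∂Pbar, PhiBar T d L M N n hn S f g h α β γ H a b μ c x = 0

/-- Strict no arbitrage (SNA) in `𝕄̄ⁿ`. -/
def SNAbar (T d L M N n : ℕ) (hn : N ≤ n) (ℱ : ℕ → MeasurableSpace Ω)
    (S : ℕ → Ω → Fin d → ℝ) (f : Fin L → Ω → ℝ) (g : Fin M → ℕ → Ω → ℝ)
    (h : Fin N → ℕ → Ω → ℝ) (Pbar : Measure (EnlOmega Ω T n))
    (α : Fin L → ℝ) (β : Fin M → ℝ) (γ : Fin N → ℝ) : Prop :=
  ∃ ε > (0 : ℝ), NAbar T d L M N n hn ℱ S f g h Pbar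
    (fun i => α i - ε) (fun j => β j - ε) (fun k => γ k + ε)

/-- `sup_{τ ∈ 𝒯̄ⁿ} E_Q[ḡ_τ]` for an American option `g` on the original space. -/
def supStop (T n : ℕ) (ℱ : ℕ → MeasurableSpace Ω) (g : ℕ → Ω → ℝ)
    (Q : Measure (EnlOmega Ω T n)) : ℝ :=
  sSup {r : ℝ | ∃ τ, IsEnlStoppingTime T n ℱ τ ∧ r = ∫ x, g ((τ x) : ℕ) x.1 ∂Q}

/-- The set `𝒬̄ⁿ` of martingale measures equivalent to `ℙ̄ⁿ` satisfying the strict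
price inequalities. -/
def QbarSet (T d L M N n : ℕ) (hn : N ≤ n) (ℱ : ℕ → MeasurableSpace Ω)
    (S : ℕ → Ω → Fin d → ℝ) (f : Fin L → Ω → ℝ) (g : Fin M → ℕ → Ω → ℝ)
    (h : Fin N → ℕ → Ω → ℝ) (Pbar : Measure (EnlOmega Ω T n))
    (α : Fin L → ℝ) (β : Fin M → ℝ) (γ : Fin N → ℝ) :
    Set (Measure (EnlOmega Ω T n)) :=
  {Q | IsProbabilityMeasure Q ∧ Q ≪ Pbar ∧ Pbar ≪ Q ∧
    IsMartingaleMeasure T d (enlF T n ℱ) (extProc T n S) Q ∧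
    (∀ i, ∫ x, extFun T n (f i) x ∂Q < α i) ∧
    (∀ k, γ k < ∫ x, extShort T N n hn h k x ∂Q) ∧
    ∀ j, supStop T n ℱ (g j) Q < β j}

/-- The measure `(1/(T+1)) · (δ_0 + … + δ_T)` on `𝕋`. -/
def uniformTime (T : ℕ) : Measure (Fin (T + 1)) :=
  ((T : ENNReal) + 1)⁻¹ • ∑ t : Fin (T + 1), Measure.dirac t

/-- `Q' = (1/(T+1)) Q ⊗ (δ_0 + … + δ_T)` : attach an independent uniform extra exercise
time to a measure on `Ω̄^N`. -/
def attachUniform (T N : ℕ) (Q : Measure (EnlOmega Ω T N)) :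
    Measure (EnlOmega Ω T (N + 1)) :=
  (Q.prod (uniformTime T)).map
    (fun p : EnlOmega Ω T N × Fin (T + 1) => (p.1.1, Fin.snoc p.1.2 p.2))

/-- The restriction of a measure on `Ω̄^{N+1}` to `(Ω̄^N, 𝓕̄^N_T)`: the image under
forgetting the last exercise time. -/
def restrictLast (T N : ℕ) (R' : Measure (EnlOmega Ω T (N + 1))) :
    Measure (EnlOmega Ω T N) :=
  R'.map (fun x : EnlOmega Ω T (N + 1) => (x.1, fun k : Fin N => x.2 k.castSucc))

section Aux

variable {Ω : Type*}

lemma measurableSet_discrete {K : Type*} [Countable K] [MeasurableSpace K]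
    [MeasurableSingletonClass K] (s : Set K) : MeasurableSet s :=
  s.to_countable.measurableSet

/-- The forgetful map `Ω̄^{N+1} → Ω̄^N`. -/
def projE (T N : ℕ) : EnlOmega Ω T (N + 1) → EnlOmega Ω T N :=
  fun x => (x.1, fun k : Fin N => x.2 k.castSucc)

/-- The embedding `Ω̄^N → Ω̄^{N+1}` fixing the last exercise time to `s`. -/
def iotaE (T N : ℕ) (s : Fin (T + 1)) : EnlOmega Ω T N → EnlOmega Ω T (N + 1) :=
  fun y => (y.1, Fin.snoc y.2 s)

variable [MeasurableSpace Ω]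

lemma enlF_le (T n : ℕ) (ℱ : ℕ → MeasurableSpace Ω)
    (hle : ∀ t, ℱ t ≤ (inferInstance : MeasurableSpace Ω)) (t : ℕ) :
    enlF T n ℱ t ≤ (inferInstance : MeasurableSpace (EnlOmega Ω T n)) := by
  refine MeasurableSpace.generateFrom_le ?_
  rintro A (⟨B, hB, rfl⟩ | ⟨k, s, hs, rfl⟩)
  · exact measurable_fst (hle t _ hB)
  · exact measurable_snd (measurableSet_discrete {v : Fin n → Fin (T+1) | ((v k : ℕ)) ≤ s})

lemma measurable_projE (T N : ℕ) : Measurable (projE (Ω := Ω) T N) :=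
  measurable_fst.prodMk <| measurable_pi_lambda _ fun k =>
    (measurable_pi_apply _).comp measurable_snd

lemma measurable_iotaE (T N : ℕ) (s : Fin (T + 1)) : Measurable (iotaE (Ω := Ω) T N s) := by
  refine measurable_fst.prodMk <| measurable_pi_lambda _ fun j => ?_
  induction j using Fin.lastCases with
  | last => simp only [Fin.snoc_last]; exact measurable_const
  | cast k => simp only [Fin.snoc_castSucc]; exact (measurable_pi_apply _).comp measurable_snd

lemma measurable_sigmaE (T N : ℕ) :
    Measurable (fun p : EnlOmega Ω T N × Fin (T + 1) => ((p.1.1, Fin.snoc p.1.2 p.2) : EnlOmega Ω T (N+1))) := by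
  refine (measurable_fst.fst).prodMk <| measurable_pi_lambda _ fun j => ?_
  induction j using Fin.lastCases with
  | last => simp only [Fin.snoc_last]; exact measurable_snd
  | cast k => simp only [Fin.snoc_castSucc]; exact (measurable_pi_apply _).comp (measurable_fst.snd)

lemma measurable_projE_enlF (T N : ℕ) (ℱ : ℕ → MeasurableSpace Ω) (t : ℕ) :
    @Measurable _ _ (enlF T (N + 1) ℱ t) (enlF T N ℱ t) (projE T N) := by
  refine @measurable_generateFrom _ _ (enlF T (N + 1) ℱ t) _ _ ?_
  rintro A (⟨B, hB, rfl⟩ | ⟨k, s, hs, rfl⟩)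
  · exact MeasurableSpace.measurableSet_generateFrom (Or.inl ⟨B, hB, rfl⟩)
  · exact MeasurableSpace.measurableSet_generateFrom (Or.inr ⟨k.castSucc, s, hs, rfl⟩)

lemma measurable_iotaE_enlF (T N : ℕ) (ℱ : ℕ → MeasurableSpace Ω) (s₀ : Fin (T + 1)) (t : ℕ) :
    @Measurable _ _ (enlF T N ℱ t) (enlF T (N + 1) ℱ t) (iotaE T N s₀) := by
  refine @measurable_generateFrom _ _ (enlF T N ℱ t) _ _ ?_
  rintro A (⟨B, hB, rfl⟩ | ⟨k, s, hs, rfl⟩)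
  · exact MeasurableSpace.measurableSet_generateFrom (Or.inl ⟨B, hB, rfl⟩)
  · induction k using Fin.lastCases with
    | last =>
      by_cases hc : ((s₀ : ℕ)) ≤ s
      · have : iotaE T N s₀ ⁻¹' {x : EnlOmega Ω T (N+1) | ((x.2 (Fin.last N) : ℕ)) ≤ s} = Set.univ := by
          ext y; simp [iotaE, Fin.snoc_last, hc]
        rw [this]; exact @MeasurableSet.univ _ (enlF T N ℱ t)
      · have : iotaE T N s₀ ⁻¹' {x : EnlOmega Ω T (N+1) | ((x.2 (Fin.last N) : ℕ)) ≤ s} = ∅ := by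
          ext y; simp [iotaE, Fin.snoc_last, hc]
        rw [this]; exact @MeasurableSet.empty _ (enlF T N ℱ t)
    | cast k =>
      have : iotaE T N s₀ ⁻¹' {x : EnlOmega Ω T (N+1) | ((x.2 k.castSucc : ℕ)) ≤ s}
          = {y : EnlOmega Ω T N | ((y.2 k : ℕ)) ≤ s} := by
        ext y; simp [iotaE, Fin.snoc_castSucc]
      rw [this]
      exact MeasurableSpace.measurableSet_generateFrom (Or.inr ⟨k, s, hs, rfl⟩)

end Aux

section Aux2

variable {Ω : Type*} [MeasurableSpace Ω]

lemma prod_null_iff {K : Type*} [MeasurableSpace K] [Fintype K] [MeasurableSingletonClass K]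
    (μ : Measure Ω) [SFinite μ] (ρ : Measure K) [SFinite ρ] (hρ : ∀ k, ρ {k} ≠ 0)
    {A : Set (Ω × K)} (hA : MeasurableSet A) :
    (μ.prod ρ) A = 0 ↔ ∀ k, μ {ω | (ω, k) ∈ A} = 0 := by
  rw [Measure.prod_apply_symm hA, lintegral_fintype, Finset.sum_eq_zero_iff]
  constructor
  · intro H k
    rcases mul_eq_zero.1 (H k (Finset.mem_univ k)) with h | h
    · exact h
    · exact absurd h (hρ k)
  · intro H k _
    rw [mul_eq_zero]; exact Or.inl (H k)

lemma prod_null_iff' {K : Type*} [MeasurableSpace K] [Fintype K] [MeasurableSingletonClass K]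
    (μ : Measure Ω) [SFinite μ] (ρ : Measure K) [SFinite ρ] (hρ : ∀ k, ρ {k} ≠ 0)
    (A : Set (Ω × K)) :
    (μ.prod ρ) A = 0 ↔ ∀ k, μ {ω | (ω, k) ∈ A} = 0 := by
  constructor
  · intro hnull k
    obtain ⟨A', hsub, hmeas, hA'⟩ := exists_measurable_superset_of_null hnull
    exact measure_mono_null (fun ω hω => hsub hω) ((prod_null_iff μ ρ hρ hmeas).1 hA' k)
  · intro H
    have hsub : A ⊆ ⋃ k : K, {ω | (ω, k) ∈ A} ×ˢ ({k} : Set K) := by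
      rintro ⟨ω, k⟩ hx
      exact Set.mem_iUnion.2 ⟨k, hx, rfl⟩
    refine measure_mono_null hsub (measure_iUnion_null fun k => ?_)
    obtain ⟨B', hsub', hmeas', hB'⟩ := exists_measurable_superset_of_null (H k)
    refine measure_mono_null (Set.prod_mono hsub' subset_rfl) ?_
    rw [Measure.prod_prod, hB', zero_mul]

lemma ae_prod_iff_forall {K : Type*} [MeasurableSpace K] [Fintype K] [MeasurableSingletonClass K]
    (μ : Measure Ω) [SFinite μ] (ρ : Measure K) [SFinite ρ] (hρ : ∀ k, ρ {k} ≠ 0)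
    (p : Ω × K → Prop) :
    (∀ᵐ x ∂μ.prod ρ, p x) ↔ ∀ k, ∀ᵐ ω ∂μ, p (ω, k) := by
  rw [ae_iff]
  simp_rw [ae_iff]
  exact prod_null_iff' μ ρ hρ _

instance uniformTime_prob (T : ℕ) : IsProbabilityMeasure (uniformTime T) := by
  constructor
  rw [uniformTime, Measure.smul_apply, Measure.finset_sum_apply]
  simp only [measure_univ, Finset.sum_const, Finset.card_univ, Fintype.card_fin, nsmul_eq_mul,
    mul_one, smul_eq_mul]
  rw [show ((T + 1 : ℕ) : ENNReal) = (T : ENNReal) + 1 by push_cast; ring]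
  exact ENNReal.inv_mul_cancel (by simp) (by simp)

lemma uniformTime_singleton (T : ℕ) (s : Fin (T + 1)) :
    uniformTime T {s} = ((T : ENNReal) + 1)⁻¹ := by
  rw [uniformTime, Measure.smul_apply, Measure.finset_sum_apply]
  have : ∀ t : Fin (T + 1), Measure.dirac t ({s} : Set (Fin (T+1))) = if t = s then 1 else 0 := by
    intro t
    rw [Measure.dirac_apply' _ (measurableSet_singleton _)]
    by_cases h : t = s <;> simp [Set.indicator, h]
  simp only [this, Finset.sum_ite_eq', Finset.mem_univ, if_true, smul_eq_mul, mul_one]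

lemma attachUniform_eq (T N : ℕ) (Q : Measure (EnlOmega Ω T N)) [SFinite Q] :
    attachUniform T N Q
      = ((T : ENNReal) + 1)⁻¹ • ∑ s : Fin (T + 1), Q.map (iotaE T N s) := by
  ext A hA
  rw [attachUniform, Measure.map_apply (measurable_sigmaE T N) hA,
    Measure.prod_apply_symm ((measurable_sigmaE T N) hA), lintegral_fintype,
    Measure.smul_apply, Measure.finset_sum_apply]
  simp_rw [uniformTime_singleton, Measure.map_apply (measurable_iotaE T N _) hA]
  rw [← Finset.sum_mul, mul_comm, smul_eq_mul]
  exact congrArg _ (Finset.sum_congr rfl fun s _ => rfl)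

lemma attachUniform_null_iff (T N : ℕ) (Q : Measure (EnlOmega Ω T N)) [SFinite Q]
    {A : Set (EnlOmega Ω T (N + 1))} (hA : MeasurableSet A) :
    attachUniform T N Q A = 0 ↔ ∀ s, Q (iotaE T N s ⁻¹' A) = 0 := by
  rw [attachUniform_eq, Measure.smul_apply, Measure.finset_sum_apply]
  simp_rw [Measure.map_apply (measurable_iotaE T N _) hA]
  rw [smul_eq_mul, mul_eq_zero]
  have h1 : ((T : ENNReal) + 1)⁻¹ ≠ 0 := by simp
  simp only [h1, false_or]
  rw [Finset.sum_eq_zero_iff]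
  exact ⟨fun H s => H s (Finset.mem_univ s), fun H s _ => H s⟩

lemma restrict_finset_sum {X ι : Type*} [MeasurableSpace X] (s : Finset ι) (μ : ι → Measure X)
    (A : Set X) : (∑ i ∈ s, μ i).restrict A = ∑ i ∈ s, (μ i).restrict A := by
  induction s using Finset.cons_induction with
  | empty => simp
  | cons i s hi ih => rw [Finset.sum_cons, Finset.sum_cons, Measure.restrict_add, ih]

lemma cToReal (T : ℕ) : (((T : ENNReal) + 1)⁻¹).toReal = ((T : ℝ) + 1)⁻¹ := by
  rw [ENNReal.toReal_inv,
    show (T : ENNReal) + 1 = ((T + 1 : ℕ) : ENNReal) by push_cast; ring,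
    ENNReal.toReal_natCast,
    show ((T + 1 : ℕ) : ℝ) = (T : ℝ) + 1 by push_cast; ring]

lemma setIntegral_attach {E : Type*} [NormedAddCommGroup E] [NormedSpace ℝ E]
    (T N : ℕ) (Q : Measure (EnlOmega Ω T N)) [IsProbabilityMeasure Q]
    {F : EnlOmega Ω T (N + 1) → E} (hF : StronglyMeasurable F)
    (hInt : ∀ s, Integrable (fun y => F (iotaE T N s y)) Q)
    {A : Set (EnlOmega Ω T (N + 1))} (hA : MeasurableSet A) :
    ∫ x in A, F x ∂(attachUniform T N Q)
      = ((T : ℝ) + 1)⁻¹ • ∑ s : Fin (T + 1), ∫ y in iotaE T N s ⁻¹' A, F (iotaE T N s y) ∂Q := by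
  have hsm : ∀ s, AEStronglyMeasurable F (Q.map (iotaE T N s)) := fun s =>
    hF.aestronglyMeasurable
  have hIntMap : ∀ s, Integrable F (Q.map (iotaE T N s)) := fun s =>
    (integrable_map_measure (hsm s) (measurable_iotaE T N s).aemeasurable).2 (hInt s)
  rw [attachUniform_eq, Measure.restrict_smul, restrict_finset_sum, integral_smul_measure,
    integral_finset_sum_measure (fun s _ => (hIntMap s).restrict), cToReal]
  exact congrArg (fun z => ((T : ℝ) + 1)⁻¹ • z) (Finset.sum_congr rfl fun s _ =>
    setIntegral_map hA (hsm s) (measurable_iotaE T N s).aemeasurable)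

lemma integral_attach {E : Type*} [NormedAddCommGroup E] [NormedSpace ℝ E]
    (T N : ℕ) (Q : Measure (EnlOmega Ω T N)) [IsProbabilityMeasure Q]
    {F : EnlOmega Ω T (N + 1) → E} (hF : StronglyMeasurable F)
    (hInt : ∀ s, Integrable (fun y => F (iotaE T N s y)) Q) :
    ∫ x, F x ∂(attachUniform T N Q)
      = ((T : ℝ) + 1)⁻¹ • ∑ s : Fin (T + 1), ∫ y, F (iotaE T N s y) ∂Q := by
  have := setIntegral_attach T N Q hF hInt (A := Set.univ) MeasurableSet.univ
  simpa using this

lemma integral_attach_const {E : Type*} [NormedAddCommGroup E] [NormedSpace ℝ E]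
    (T N : ℕ) (Q : Measure (EnlOmega Ω T N)) [IsProbabilityMeasure Q]
    {F : EnlOmega Ω T (N + 1) → E} (hF : StronglyMeasurable F) {G : EnlOmega Ω T N → E}
    (hFG : ∀ s y, F (iotaE T N s y) = G y) (hG : Integrable G Q) :
    ∫ x, F x ∂(attachUniform T N Q) = ∫ y, G y ∂Q := by
  rw [integral_attach T N Q hF (fun s => by simpa [funext (hFG s)] using hG)]
  simp_rw [hFG]
  rw [Finset.sum_const, Finset.card_univ, Fintype.card_fin, ← Nat.cast_smul_eq_nsmul ℝ,
    smul_smul, show ((T : ℝ) + 1)⁻¹ * ((T + 1 : ℕ) : ℝ) = 1 by push_cast; field_simp, one_smul]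

lemma integrable_of_bound {X : Type*} [MeasurableSpace X] {μ : Measure X} [IsFiniteMeasure μ]
    {F : X → ℝ} (hm : AEStronglyMeasurable F μ) (C : ℝ) (hC : ∀ x, |F x| ≤ C) :
    Integrable F μ :=
  ⟨hm, HasFiniteIntegral.of_bounded (C := C)
    (Filter.Eventually.of_forall fun x => by simpa [Real.norm_eq_abs] using hC x)⟩

lemma abs_integral_le {X : Type*} [MeasurableSpace X] (μ : Measure X) [IsProbabilityMeasure μ]
    {F : X → ℝ} (C : ℝ) (hC : ∀ x, |F x| ≤ C) : |∫ x, F x ∂μ| ≤ C := by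
  have := norm_integral_le_of_norm_le_const (μ := μ) (f := F) (C := C)
    (Filter.Eventually.of_forall fun x => by simpa [Real.norm_eq_abs] using hC x)
  simpa [Real.norm_eq_abs] using this

lemma measurable_eval {X : Type*} [MeasurableSpace X] {T : ℕ} (φ : ℕ → Ω → ℝ)
    (hφ : ∀ t, Measurable (φ t)) {j : X → Fin (T + 1)} (hj : Measurable j)
    {u : X → Ω} (hu : Measurable u) : Measurable fun x => φ ((j x : ℕ)) (u x) := by
  have hG : Measurable fun p : Ω × Fin (T + 1) => φ ((p.2 : ℕ)) p.1 :=
    measurable_from_prod_countable_left fun t => hφ (t : ℕ)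
  exact hG.comp (hu.prodMk hj)

lemma measurable_of_stoppingTime {T n : ℕ} {ℱ : ℕ → MeasurableSpace Ω}
    (hle : ∀ t, ℱ t ≤ (inferInstance : MeasurableSpace Ω))
    {τ : EnlOmega Ω T n → Fin (T + 1)} (hτ : IsEnlStoppingTime T n ℱ τ) :
    Measurable τ := by
  apply measurable_to_countable
  intro y
  rcases Nat.eq_zero_or_pos ((τ y : ℕ)) with h0 | hpos
  · have hset : τ ⁻¹' {τ y} = {x | ((τ x : ℕ)) ≤ 0} := by
      ext x
      simp only [Set.mem_preimage, Set.mem_singleton_iff, Set.mem_setOf_eq, Nat.le_zero,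
        Fin.ext_iff, h0]
    rw [hset]
    exact enlF_le T n ℱ hle 0 _ (hτ 0)
  · have hset : τ ⁻¹' {τ y}
        = {x | ((τ x : ℕ)) ≤ (τ y : ℕ)} \ {x | ((τ x : ℕ)) ≤ (τ y : ℕ) - 1} := by
      ext x
      simp only [Set.mem_preimage, Set.mem_singleton_iff, Set.mem_diff, Set.mem_setOf_eq,
        Fin.ext_iff]
      omega
    rw [hset]
    exact (enlF_le T n ℱ hle _ _ (hτ _)).diff (enlF_le T n ℱ hle _ _ (hτ _))

end Aux2

section Aux3

variable {Ω : Type*}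

lemma castLE_succ_eq {N : ℕ} (k : Fin N) : Fin.castLE (Nat.le_succ N) k = k.castSucc := rfl

lemma castLE_rfl_eq {N : ℕ} (k : Fin N) : Fin.castLE (le_refl N) k = k := rfl

lemma extShort_iotaE {T N : ℕ} (h : Fin N → ℕ → Ω → ℝ) (k : Fin N) (s : Fin (T + 1))
    (y : EnlOmega Ω T N) :
    extShort T N (N + 1) (Nat.le_succ N) h k (iotaE T N s y)
      = extShort T N N le_rfl h k y := by
  simp only [extShort, iotaE, castLE_succ_eq, castLE_rfl_eq, Fin.snoc_castSucc]

lemma extShort_projE {T N : ℕ} (h : Fin N → ℕ → Ω → ℝ) (k : Fin N)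
    (x : EnlOmega Ω T (N + 1)) :
    extShort T N N le_rfl h k (projE T N x)
      = extShort T N (N + 1) (Nat.le_succ N) h k x := rfl

lemma phiBar_projE (T d L M N : ℕ) (S : ℕ → Ω → Fin d → ℝ) (f : Fin L → Ω → ℝ)
    (g : Fin M → ℕ → Ω → ℝ) (h : Fin N → ℕ → Ω → ℝ)
    (α : Fin L → ℝ) (β : Fin M → ℝ) (γ : Fin N → ℝ)
    (H : ℕ → EnlOmega Ω T N → Fin d → ℝ) (a : Fin L → ℝ) (b : Fin M → ℝ)
    (μ : Fin M → ℕ → EnlOmega Ω T N → ℝ) (c : Fin N → ℝ) (x : EnlOmega Ω T (N + 1)) :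
    PhiBar T d L M N (N + 1) (Nat.le_succ N) S f g h α β γ
      (fun t => H t ∘ projE T N) a b (fun j t => μ j t ∘ projE T N) c x
    = PhiBar T d L M N N le_rfl S f g h α β γ H a b μ c (projE T N x) := by
  simp only [PhiBar, Function.comp_apply]
  rw [show (∑ k, c k * (extShort T N (N + 1) (Nat.le_succ N) h k x - γ k))
      = ∑ k, c k * (extShort T N N le_rfl h k (projE T N x) - γ k) from
    Finset.sum_congr rfl fun k _ => by rw [extShort_projE]]
  rfl

lemma phiBar_iotaE (T d L M N : ℕ) (S : ℕ → Ω → Fin d → ℝ) (f : Fin L → Ω → ℝ)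
    (g : Fin M → ℕ → Ω → ℝ) (h : Fin N → ℕ → Ω → ℝ)
    (α : Fin L → ℝ) (β : Fin M → ℝ) (γ : Fin N → ℝ)
    (H : ℕ → EnlOmega Ω T (N + 1) → Fin d → ℝ) (a : Fin L → ℝ) (b : Fin M → ℝ)
    (μ : Fin M → ℕ → EnlOmega Ω T (N + 1) → ℝ) (c : Fin N → ℝ) (s : Fin (T + 1))
    (y : EnlOmega Ω T N) :
    PhiBar T d L M N (N + 1) (Nat.le_succ N) S f g h α β γ H a b μ c (iotaE T N s y)
    = PhiBar T d L M N N le_rfl S f g h α β γ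
      (fun t => H t ∘ iotaE T N s) a b (fun j t => μ j t ∘ iotaE T N s) c y := by
  simp only [PhiBar, Function.comp_apply]
  rw [show (∑ k, c k * (extShort T N (N + 1) (Nat.le_succ N) h k (iotaE T N s y) - γ k))
      = ∑ k, c k * (extShort T N N le_rfl h k y - γ k) from
    Finset.sum_congr rfl fun k _ => by rw [extShort_iotaE]]
  rfl

variable [MeasurableSpace Ω]

section AE

variable {T N : ℕ} (ℙ : Measure Ω) [IsProbabilityMeasure ℙ]
  (PN : Measure (Fin N → Fin (T + 1))) [IsProbabilityMeasure PN]
  (PN1 : Measure (Fin (N + 1) → Fin (T + 1))) [IsProbabilityMeasure PN1]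

lemma ae_projE_iff (hfullN : ∀ v : Fin N → Fin (T + 1), PN {v} ≠ 0)
    (hfullN1 : ∀ v : Fin (N + 1) → Fin (T + 1), PN1 {v} ≠ 0)
    (p : EnlOmega Ω T N → Prop) :
    (∀ᵐ x ∂ℙ.prod PN1, p (projE T N x)) ↔ ∀ᵐ y ∂ℙ.prod PN, p y := by
  rw [ae_prod_iff_forall ℙ PN1 hfullN1, ae_prod_iff_forall ℙ PN hfullN]
  constructor
  · intro Hyp w
    filter_upwards [Hyp (Fin.snoc w 0)] with ω hω
    have e : (fun k : Fin N => Fin.snoc (α := fun _ => Fin (T + 1)) w 0 k.castSucc) = w := by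
      funext k; simp
    rw [← e]
    exact hω
  · intro Hyp v
    filter_upwards [Hyp (fun k => v k.castSucc)] with ω hω
    exact hω

lemma ae_iotaE (hfullN : ∀ v : Fin N → Fin (T + 1), PN {v} ≠ 0)
    (hfullN1 : ∀ v : Fin (N + 1) → Fin (T + 1), PN1 {v} ≠ 0)
    (p : EnlOmega Ω T (N + 1) → Prop) (s : Fin (T + 1))
    (hp : ∀ᵐ x ∂ℙ.prod PN1, p x) : ∀ᵐ y ∂ℙ.prod PN, p (iotaE T N s y) := by
  rw [ae_prod_iff_forall ℙ PN1 hfullN1] at hp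
  rw [ae_prod_iff_forall ℙ PN hfullN]
  intro w
  filter_upwards [hp (Fin.snoc w s)] with ω hω
  exact hω

lemma ae_of_forall_iotaE (hfullN : ∀ v : Fin N → Fin (T + 1), PN {v} ≠ 0)
    (hfullN1 : ∀ v : Fin (N + 1) → Fin (T + 1), PN1 {v} ≠ 0)
    (p : EnlOmega Ω T (N + 1) → Prop)
    (hp : ∀ s, ∀ᵐ y ∂ℙ.prod PN, p (iotaE T N s y)) : ∀ᵐ x ∂ℙ.prod PN1, p x := by
  rw [ae_prod_iff_forall ℙ PN1 hfullN1]
  intro v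
  have := (ae_prod_iff_forall ℙ PN hfullN _).1 (hp (v (Fin.last N))) (Fin.init v)
  filter_upwards [this] with ω hω
  have e : Fin.snoc (Fin.init v) (v (Fin.last N)) = v := Fin.snoc_init_self v
  rw [← e]
  exact hω

end AE

end Aux3

lemma measurable_extShort {Ω : Type*} [MeasurableSpace Ω] {T N n : ℕ} (hn : N ≤ n)
    (ℱ : ℕ → MeasurableSpace Ω) (hle : ∀ t, ℱ t ≤ (inferInstance : MeasurableSpace Ω))
    (h : Fin N → ℕ → Ω → ℝ) (hh : ∀ k t, Measurable[ℱ t] (h k t)) (k : Fin N) :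
    Measurable (extShort T N n hn h k) := by
  unfold extShort
  refine measurable_eval (h k) (fun t => (hh k t).mono (hle t) le_rfl) ?_ measurable_fst
  exact (measurable_pi_apply _).comp measurable_snd

section Main

variable {Ω : Type*} [MeasurableSpace Ω]

lemma restrictLast_eq (T N : ℕ) (R' : Measure (EnlOmega Ω T (N + 1))) :
    restrictLast T N R' = R'.map (projE T N) := rfl

lemma isEnlStoppingTime_const_zero (T n : ℕ) (ℱ : ℕ → MeasurableSpace Ω) :
    IsEnlStoppingTime T n ℱ (fun _ => (0 : Fin (T + 1))) := by
  intro t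
  have : {x : EnlOmega Ω T n | (((0 : Fin (T + 1)) : ℕ)) ≤ t} = Set.univ := by
    ext x; simp
  rw [this]
  exact @MeasurableSet.univ _ (enlF T n ℱ t)

lemma smul_sum_sSup (T : ℕ) (r : ℝ) :
    ((T : ℝ) + 1)⁻¹ • ∑ _s : Fin (T + 1), r = r := by
  rw [Finset.sum_const, Finset.card_univ, Fintype.card_fin, ← Nat.cast_smul_eq_nsmul ℝ,
    smul_smul, show ((T : ℝ) + 1)⁻¹ * ((T + 1 : ℕ) : ℝ) = 1 by push_cast; field_simp, one_smul]

variable (T d L M N : ℕ) (ℱ : ℕ → MeasurableSpace Ω)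
  (ℙ : Measure Ω) [IsProbabilityMeasure ℙ]
  (S : ℕ → Ω → Fin d → ℝ)
  (f : Fin L → Ω → ℝ)
  (g : Fin M → ℕ → Ω → ℝ)
  (h : Fin N → ℕ → Ω → ℝ)
  (α : Fin L → ℝ) (β : Fin M → ℝ) (γ : Fin N → ℝ)
  (PN : Measure (Fin N → Fin (T + 1))) [IsProbabilityMeasure PN]
  (PN1 : Measure (Fin (N + 1) → Fin (T + 1))) [IsProbabilityMeasure PN1]

lemma mem_attachUniform
    (hle : ∀ t, ℱ t ≤ (inferInstance : MeasurableSpace Ω))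
    (hS : ∀ t, Measurable[ℱ t] (S t)) (hf : ∀ i, Measurable[ℱ T] (f i))
    (hfb : ∃ C, ∀ i ω, |f i ω| ≤ C) (hg : ∀ j t, Measurable[ℱ t] (g j t))
    (hgb : ∃ C, ∀ j t ω, |g j t ω| ≤ C) (hh : ∀ k t, Measurable[ℱ t] (h k t))
    (hhb : ∃ C, ∀ k t ω, |h k t ω| ≤ C)
    (hfullN : ∀ v : Fin N → Fin (T + 1), PN {v} ≠ 0)
    (hfullN1 : ∀ v : Fin (N + 1) → Fin (T + 1), PN1 {v} ≠ 0)
    (Q : Measure (EnlOmega Ω T N))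
    (hQ : Q ∈ QbarSet T d L M N N le_rfl ℱ S f g h (ℙ.prod PN) α β γ) :
    attachUniform T N Q ∈
      QbarSet T d L M N (N + 1) (Nat.le_succ N) ℱ S f g h (ℙ.prod PN1) α β γ := by
  obtain ⟨hQprob, hQac, hacQ, hQmart, hQf, hQh, hQg⟩ := hQ
  haveI := hQprob
  refine ⟨?_, ?_, ?_, ⟨?_, ?_⟩, ?_, ?_, ?_⟩
  · exact Measure.isProbabilityMeasure_map (measurable_sigmaE T N).aemeasurable
  · -- Q' ≪ ℙ ⊗ PN1
    refine Measure.AbsolutelyContinuous.mk fun A hA h0 => ?_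
    rw [attachUniform_null_iff T N Q hA]
    intro s
    have hslices := (prod_null_iff' ℙ PN1 hfullN1 A).1 h0
    refine hQac ((prod_null_iff' ℙ PN hfullN _).2 fun w => ?_)
    exact hslices (Fin.snoc w s)
  · -- ℙ ⊗ PN1 ≪ Q'
    refine Measure.AbsolutelyContinuous.mk fun A hA h0 => ?_
    rw [attachUniform_null_iff T N Q hA] at h0
    refine (prod_null_iff' ℙ PN1 hfullN1 A).2 fun v => ?_
    have hv := (prod_null_iff' ℙ PN hfullN _).1 (hacQ (h0 (v (Fin.last N)))) (Fin.init v)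
    refine measure_mono_null (fun ω hω => ?_) hv
    show (ω, Fin.init v) ∈ iotaE T N (v (Fin.last N)) ⁻¹' A
    show (ω, Fin.snoc (Fin.init v) (v (Fin.last N))) ∈ A
    rw [Fin.snoc_init_self v]
    exact hω
  · -- integrability
    intro t ht
    rw [attachUniform_eq, integrable_smul_measure (by simp) (by simp),
      integrable_finset_sum_measure]
    intro s _
    have hm : Measurable (extProc T (N + 1) S t) :=
      ((hS t).mono (hle t) le_rfl).comp measurable_fst
    rw [integrable_map_measure hm.aestronglyMeasurable (measurable_iotaE T N s).aemeasurable]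
    exact hQmart.1 t ht
  · -- martingale property
    intro t ht A hA
    have hm1 : Measurable (extProc T (N + 1) S (t + 1)) :=
      ((hS (t + 1)).mono (hle (t + 1)) le_rfl).comp measurable_fst
    have hm0 : Measurable (extProc T (N + 1) S t) :=
      ((hS t).mono (hle t) le_rfl).comp measurable_fst
    have hAmb : MeasurableSet A := enlF_le T (N + 1) ℱ hle t A hA
    rw [setIntegral_attach T N Q hm1.stronglyMeasurable (fun s => hQmart.1 (t + 1) ht) hAmb,
      setIntegral_attach T N Q hm0.stronglyMeasurable (fun s => hQmart.1 t ht.le) hAmb]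
    refine congrArg (fun z => ((T : ℝ) + 1)⁻¹ • z) (Finset.sum_congr rfl fun s _ => ?_)
    exact hQmart.2 t ht _ ((measurable_iotaE_enlF T N ℱ s t) hA)
  · -- European options
    intro i
    obtain ⟨Cf, hCf⟩ := hfb
    have hmi : Measurable (extFun T (N + 1) (f i)) :=
      ((hf i).mono (hle T) le_rfl).comp measurable_fst
    have hGm : Measurable (extFun T N (f i)) :=
      ((hf i).mono (hle T) le_rfl).comp measurable_fst
    have hGint : Integrable (extFun T N (f i)) Q :=
      integrable_of_bound hGm.aestronglyMeasurable Cf (fun x => hCf i x.1)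
    rw [integral_attach_const T N Q hmi.stronglyMeasurable (fun s y => rfl) hGint]
    exact hQf i
  · -- shorted American options
    intro k
    obtain ⟨Ch, hCh⟩ := hhb
    have hmk : Measurable (extShort T N (N + 1) (Nat.le_succ N) h k) :=
      measurable_extShort (Nat.le_succ N) ℱ hle h hh k
    have hGm : Measurable (extShort T N N le_rfl h k) :=
      measurable_extShort le_rfl ℱ hle h hh k
    have hGint : Integrable (extShort T N N le_rfl h k) Q :=
      integrable_of_bound hGm.aestronglyMeasurable Ch (fun x => hCh k _ x.1)
    rw [integral_attach_const T N Q hmk.stronglyMeasurable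
      (fun s y => extShort_iotaE h k s y) hGint]
    exact hQh k
  · -- American options
    intro j
    obtain ⟨Cg, hCg⟩ := hgb
    refine lt_of_le_of_lt ?_ (hQg j)
    rw [supStop, supStop]
    have hVbdd : BddAbove {r : ℝ | ∃ τ, IsEnlStoppingTime T N ℱ τ ∧
        r = ∫ x, g j ((τ x : ℕ)) x.1 ∂Q} := by
      refine ⟨Cg, ?_⟩
      rintro r ⟨τ, hτ, rfl⟩
      exact (abs_le.1 (abs_integral_le Q Cg (fun x => hCg j _ x.1))).2
    refine csSup_le ⟨_, ⟨fun _ => 0, isEnlStoppingTime_const_zero T (N + 1) ℱ, rfl⟩⟩ ?_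
    rintro r ⟨τ', hτ', rfl⟩
    have hτm : Measurable τ' := measurable_of_stoppingTime hle hτ'
    have hFm : Measurable (fun x : EnlOmega Ω T (N + 1) => g j ((τ' x : ℕ)) x.1) :=
      measurable_eval (g j) (fun t => (hg j t).mono (hle t) le_rfl) hτm measurable_fst
    have hint : ∀ s, Integrable
        (fun y => g j ((τ' (iotaE T N s y) : ℕ)) (iotaE T N s y).1) Q := by
      intro s
      refine integrable_of_bound ?_ Cg (fun y => hCg j _ _)
      exact (measurable_eval (g j) (fun t => (hg j t).mono (hle t) le_rfl)
        (hτm.comp (measurable_iotaE T N s)) measurable_fst).aestronglyMeasurable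
    rw [integral_attach T N Q hFm.stronglyMeasurable hint]
    calc ((T : ℝ) + 1)⁻¹ • ∑ s : Fin (T + 1),
          ∫ y, g j ((τ' (iotaE T N s y) : ℕ)) (iotaE T N s y).1 ∂Q
        ≤ ((T : ℝ) + 1)⁻¹ • ∑ _s : Fin (T + 1), sSup {r : ℝ | ∃ τ, IsEnlStoppingTime T N ℱ τ ∧
            r = ∫ x, g j ((τ x : ℕ)) x.1 ∂Q} := by
          refine smul_le_smul_of_nonneg_left (Finset.sum_le_sum fun s _ => ?_)
            (by positivity)
          refine le_csSup hVbdd ?_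
          exact ⟨fun y => τ' (iotaE T N s y),
            fun t => (measurable_iotaE_enlF T N ℱ s t) (hτ' t), rfl⟩
      _ = _ := smul_sum_sSup T _

lemma mem_restrictLast
    (hle : ∀ t, ℱ t ≤ (inferInstance : MeasurableSpace Ω))
    (hS : ∀ t, Measurable[ℱ t] (S t)) (hf : ∀ i, Measurable[ℱ T] (f i))
    (hg : ∀ j t, Measurable[ℱ t] (g j t))
    (hgb : ∃ C, ∀ j t ω, |g j t ω| ≤ C) (hh : ∀ k t, Measurable[ℱ t] (h k t))
    (hfullN : ∀ v : Fin N → Fin (T + 1), PN {v} ≠ 0)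
    (hfullN1 : ∀ v : Fin (N + 1) → Fin (T + 1), PN1 {v} ≠ 0)
    (R' : Measure (EnlOmega Ω T (N + 1)))
    (hR' : R' ∈ QbarSet T d L M N (N + 1) (Nat.le_succ N) ℱ S f g h (ℙ.prod PN1) α β γ) :
    restrictLast T N R' ∈ QbarSet T d L M N N le_rfl ℱ S f g h (ℙ.prod PN) α β γ := by
  obtain ⟨hRprob, hRac, hacR, hRmart, hRf, hRh, hRg⟩ := hR'
  haveI := hRprob
  refine ⟨?_, ?_, ?_, ⟨?_, ?_⟩, ?_, ?_, ?_⟩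
  · exact Measure.isProbabilityMeasure_map (measurable_projE T N).aemeasurable
  · -- R ≪ ℙ ⊗ PN
    refine Measure.AbsolutelyContinuous.mk fun A hA h0 => ?_
    rw [restrictLast_eq, Measure.map_apply (measurable_projE T N) hA]
    refine hRac ((prod_null_iff' ℙ PN1 hfullN1 _).2 fun v => ?_)
    exact (prod_null_iff' ℙ PN hfullN A).1 h0 (fun k => v k.castSucc)
  · -- ℙ ⊗ PN ≪ R
    refine Measure.AbsolutelyContinuous.mk fun A hA h0 => ?_
    rw [restrictLast_eq, Measure.map_apply (measurable_projE T N) hA] at h0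
    refine (prod_null_iff' ℙ PN hfullN A).2 fun w => ?_
    have hv := (prod_null_iff' ℙ PN1 hfullN1 _).1 (hacR h0)
      (Fin.snoc (α := fun _ => Fin (T + 1)) w 0)
    refine measure_mono_null (fun ω hω => ?_) hv
    show (ω, fun k : Fin N =>
      Fin.snoc (α := fun _ => Fin (T + 1)) w 0 k.castSucc) ∈ A
    have e : (fun k : Fin N => Fin.snoc (α := fun _ => Fin (T + 1)) w 0 k.castSucc) = w := by
      funext k; simp
    rw [e]
    exact hω
  · -- integrability
    intro t ht
    have hm : Measurable (extProc T N S t) :=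
      ((hS t).mono (hle t) le_rfl).comp measurable_fst
    rw [restrictLast_eq,
      integrable_map_measure hm.aestronglyMeasurable (measurable_projE T N).aemeasurable]
    exact hRmart.1 t ht
  · -- martingale property
    intro t ht A hA
    have hm1 : Measurable (extProc T N S (t + 1)) :=
      ((hS (t + 1)).mono (hle (t + 1)) le_rfl).comp measurable_fst
    have hm0 : Measurable (extProc T N S t) :=
      ((hS t).mono (hle t) le_rfl).comp measurable_fst
    have hAmb : MeasurableSet A := enlF_le T N ℱ hle t A hA
    rw [restrictLast_eq,
      setIntegral_map hAmb hm1.aestronglyMeasurable (measurable_projE T N).aemeasurable,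
      setIntegral_map hAmb hm0.aestronglyMeasurable (measurable_projE T N).aemeasurable]
    exact hRmart.2 t ht _ ((measurable_projE_enlF T N ℱ t) hA)
  · -- European options
    intro i
    have hmi : Measurable (extFun T N (f i)) :=
      ((hf i).mono (hle T) le_rfl).comp measurable_fst
    rw [restrictLast_eq,
      integral_map (measurable_projE T N).aemeasurable hmi.aestronglyMeasurable]
    exact hRf i
  · -- shorted American options
    intro k
    have hmk : Measurable (extShort T N N le_rfl h k) :=
      measurable_extShort le_rfl ℱ hle h hh k
    rw [restrictLast_eq,
      integral_map (measurable_projE T N).aemeasurable hmk.aestronglyMeasurable]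
    exact hRh k
  · -- American options
    intro j
    obtain ⟨Cg, hCg⟩ := hgb
    refine lt_of_le_of_lt ?_ (hRg j)
    rw [supStop, supStop]
    have hVbdd : BddAbove {r : ℝ | ∃ τ, IsEnlStoppingTime T (N + 1) ℱ τ ∧
        r = ∫ x, g j ((τ x : ℕ)) x.1 ∂ R'} := by
      refine ⟨Cg, ?_⟩
      rintro r ⟨τ, hτ, rfl⟩
      exact (abs_le.1 (abs_integral_le R' Cg (fun x => hCg j _ x.1))).2
    refine csSup_le ⟨_, ⟨fun _ => 0, isEnlStoppingTime_const_zero T N ℱ, rfl⟩⟩ ?_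
    rintro r ⟨τ, hτ, rfl⟩
    have hτm : Measurable τ := measurable_of_stoppingTime hle hτ
    have hFm : Measurable (fun x : EnlOmega Ω T N => g j ((τ x : ℕ)) x.1) :=
      measurable_eval (g j) (fun t => (hg j t).mono (hle t) le_rfl) hτm measurable_fst
    refine le_csSup hVbdd ?_
    refine ⟨fun x => τ (projE T N x),
      fun t => (measurable_projE_enlF T N ℱ t) (hτ t), ?_⟩
    rw [restrictLast_eq]
    exact integral_map (measurable_projE T N).aemeasurable hFm.aestronglyMeasurable

end Main

section NA

variable {Ω : Type*} [MeasurableSpace Ω]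

lemma NAbar_transfer (T d L M N : ℕ) (ℱ : ℕ → MeasurableSpace Ω)
    (ℙ : Measure Ω) [IsProbabilityMeasure ℙ]
    (S : ℕ → Ω → Fin d → ℝ) (f : Fin L → Ω → ℝ) (g : Fin M → ℕ → Ω → ℝ)
    (h : Fin N → ℕ → Ω → ℝ) (α : Fin L → ℝ) (β : Fin M → ℝ) (γ : Fin N → ℝ)
    (PN : Measure (Fin N → Fin (T + 1))) [IsProbabilityMeasure PN]
    (PN1 : Measure (Fin (N + 1) → Fin (T + 1))) [IsProbabilityMeasure PN1]
    (hfullN : ∀ v : Fin N → Fin (T + 1), PN {v} ≠ 0)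
    (hfullN1 : ∀ v : Fin (N + 1) → Fin (T + 1), PN1 {v} ≠ 0) :
    NAbar T d L M N N le_rfl ℱ S f g h (ℙ.prod PN) α β γ ↔
      NAbar T d L M N (N + 1) (Nat.le_succ N) ℱ S f g h (ℙ.prod PN1) α β γ := by
  constructor
  · intro hNA H a b μ c hH ha hb hc hμ hae
    refine ae_of_forall_iotaE ℙ PN PN1 hfullN hfullN1 _ fun s => ?_
    have key := hNA (fun t => H t ∘ iotaE T N s) a b (fun j t => μ j t ∘ iotaE T N s) c
      (fun t => (hH t).comp (measurable_iotaE_enlF T N ℱ s t)) ha hb hc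
      (fun j => ⟨fun t => ((hμ j).1 t).comp (measurable_iotaE_enlF T N ℱ s t),
        fun t x => (hμ j).2.1 t _, fun x => (hμ j).2.2 _⟩) ?_
    · filter_upwards [key] with y hy
      rw [phiBar_iotaE]
      exact hy
    · have hs := ae_iotaE ℙ PN PN1 hfullN hfullN1 _ s hae
      filter_upwards [hs] with y hy
      rw [← phiBar_iotaE]
      exact hy
  · intro hNA H a b μ c hH ha hb hc hμ hae
    have key := hNA (fun t => H t ∘ projE T N) a b (fun j t => μ j t ∘ projE T N) c
      (fun t => (hH t).comp (measurable_projE_enlF T N ℱ t)) ha hb hc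
      (fun j => ⟨fun t => ((hμ j).1 t).comp (measurable_projE_enlF T N ℱ t),
        fun t x => (hμ j).2.1 t _, fun x => (hμ j).2.2 _⟩) ?_
    · refine (ae_projE_iff ℙ PN PN1 hfullN hfullN1
        (fun y => PhiBar T d L M N N le_rfl S f g h α β γ H a b μ c y = 0)).1 ?_
      filter_upwards [key] with x hx
      rw [← phiBar_projE]
      exact hx
    · have hs := (ae_projE_iff ℙ PN PN1 hfullN hfullN1
        (fun y => 0 ≤ PhiBar T d L M N N le_rfl S f g h α β γ H a b μ c y)).2 hae
      filter_upwards [hs] with x hx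
      rw [phiBar_projE]
      exact hx

lemma SNAbar_transfer (T d L M N : ℕ) (ℱ : ℕ → MeasurableSpace Ω)
    (ℙ : Measure Ω) [IsProbabilityMeasure ℙ]
    (S : ℕ → Ω → Fin d → ℝ) (f : Fin L → Ω → ℝ) (g : Fin M → ℕ → Ω → ℝ)
    (h : Fin N → ℕ → Ω → ℝ) (α : Fin L → ℝ) (β : Fin M → ℝ) (γ : Fin N → ℝ)
    (PN : Measure (Fin N → Fin (T + 1))) [IsProbabilityMeasure PN]
    (PN1 : Measure (Fin (N + 1) → Fin (T + 1))) [IsProbabilityMeasure PN1]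
    (hfullN : ∀ v : Fin N → Fin (T + 1), PN {v} ≠ 0)
    (hfullN1 : ∀ v : Fin (N + 1) → Fin (T + 1), PN1 {v} ≠ 0) :
    SNAbar T d L M N N le_rfl ℱ S f g h (ℙ.prod PN) α β γ ↔
      SNAbar T d L M N (N + 1) (Nat.le_succ N) ℱ S f g h (ℙ.prod PN1) α β γ := by
  unfold SNAbar
  refine exists_congr fun ε => and_congr_right fun _ => ?_
  exact NAbar_transfer T d L M N ℱ ℙ S f g h _ _ _ PN PN1 hfullN hfullN1

end NA

/-- Remark 3.3 of the paper. `𝒬̄^N ≠ ∅ ↔ 𝒬̄^{N+1} ≠ ∅`; concretely,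
`Q ∈ 𝒬̄^N` implies `(1/(T+1)) Q ⊗ (δ_0+…+δ_T) ∈ 𝒬̄^{N+1}`, and the restriction of any
`R' ∈ 𝒬̄^{N+1}` to `(Ω̄^N, 𝓕̄^N_T)` belongs to `𝒬̄^N`. Consequently SNA holds in `𝕄̄^N`
iff it holds in `𝕄̄^{N+1}`. -/
theorem QbarN_nonempty_iff_QbarN1_nonempty [MeasurableSpace.CountablyGenerated Ω]
    (T d L M N : ℕ)
    (ℱ : ℕ → MeasurableSpace Ω) (hmono : Monotone ℱ)
    (hle : ∀ t, ℱ t ≤ (inferInstance : MeasurableSpace Ω))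
    (ℙ : Measure Ω) [IsProbabilityMeasure ℙ]
    (S : ℕ → Ω → Fin d → ℝ) (hS : ∀ t, Measurable[ℱ t] (S t))
    (f : Fin L → Ω → ℝ) (hf : ∀ i, Measurable[ℱ T] (f i))
    (hfb : ∃ C, ∀ i ω, |f i ω| ≤ C)
    (g : Fin M → ℕ → Ω → ℝ) (hg : ∀ j t, Measurable[ℱ t] (g j t))
    (hgb : ∃ C, ∀ j t ω, |g j t ω| ≤ C)
    (h : Fin N → ℕ → Ω → ℝ) (hh : ∀ k t, Measurable[ℱ t] (h k t))
    (hhb : ∃ C, ∀ k t ω, |h k t ω| ≤ C)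
    (α : Fin L → ℝ) (β : Fin M → ℝ) (γ : Fin N → ℝ)
    (PN : Measure (Fin N → Fin (T + 1))) [IsProbabilityMeasure PN]
    (hfullN : ∀ v : Fin N → Fin (T + 1), 0 < PN {v})
    (PN1 : Measure (Fin (N + 1) → Fin (T + 1))) [IsProbabilityMeasure PN1]
    (hfullN1 : ∀ v : Fin (N + 1) → Fin (T + 1), 0 < PN1 {v}) :
    (∀ Q ∈ QbarSet T d L M N N le_rfl ℱ S f g h (ℙ.prod PN) α β γ,
        attachUniform T N Q ∈
          QbarSet T d L M N (N + 1) (Nat.le_succ N) ℱ S f g h (ℙ.prod PN1) α β γ) ∧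
    (∀ R' ∈ QbarSet T d L M N (N + 1) (Nat.le_succ N) ℱ S f g h (ℙ.prod PN1) α β γ,
        restrictLast T N R' ∈ QbarSet T d L M N N le_rfl ℱ S f g h (ℙ.prod PN) α β γ) ∧
    ((QbarSet T d L M N N le_rfl ℱ S f g h (ℙ.prod PN) α β γ).Nonempty ↔
      (QbarSet T d L M N (N + 1) (Nat.le_succ N) ℱ S f g h (ℙ.prod PN1) α β γ).Nonempty) ∧
    (SNAbar T d L M N N le_rfl ℱ S f g h (ℙ.prod PN) α β γ ↔
      SNAbar T d L M N (N + 1) (Nat.le_succ N) ℱ S f g h (ℙ.prod PN1) α β γ) := by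
  have hfN : ∀ v : Fin N → Fin (T + 1), PN {v} ≠ 0 := fun v => (hfullN v).ne'
  have hfN1 : ∀ v : Fin (N + 1) → Fin (T + 1), PN1 {v} ≠ 0 := fun v => (hfullN1 v).ne'
  have hA := fun Q hQ => mem_attachUniform T d L M N ℱ ℙ S f g h α β γ PN PN1 hle hS hf hfb
    hg hgb hh hhb hfN hfN1 Q hQ
  have hB := fun R' hR' => mem_restrictLast T d L M N ℱ ℙ S f g h α β γ PN PN1 hle hS hf
    hg hgb hh hfN hfN1 R' hR'
  refine ⟨hA, hB, ?_, ?_⟩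
  · exact ⟨fun ⟨Q, hQ⟩ => ⟨_, hA Q hQ⟩, fun ⟨R', hR'⟩ => ⟨_, hB R' hR'⟩⟩
  · exact SNAbar_transfer T d L M N ℱ ℙ S f g h α β γ PN PN1 hfN hfN1

end Stmt5
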